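/- Let n ≥ 1, let J be a real orthogonal n×n matrix, let F₀ be an invertible real n×n matrix, and set M = F₀ J F₀⁻¹. Then the set of symmetric positive definite matrices P satisfying M P Mᵀ = P equals { F₀ A Aᵀ F₀ᵀ : A invertible real n×n matrix with A J = J A }. -/

import Mathlib

open Matrix

private lemma posDef_conj {n : ℕ} {P B : Matrix (Fin n) (Fin n) ℝ}
    (hP : P.PosDef) (hB : IsUnit B) : (B * P * Bᵀ).PosDef := by
  rw [← conjTranspose_eq_transpose_of_trivial]
  refine PosDef.of_dotProduct_mulVec_pos ?_ ?_
  · simpa only [conjTranspose_conjTranspose] using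
      isHermitian_conjTranspose_mul_mul Bᴴ hP.1
  · intro x hx
    have hBH : IsUnit Bᴴ := by
      rw [conjTranspose_eq_transpose_of_trivial, isUnit_iff_isUnit_det, det_transpose,
        ← isUnit_iff_isUnit_det]
      exact hB
    have hx' : Bᴴ *ᵥ x ≠ 0 := by
      intro h
      exact hx <| (mulVec_injective_iff_isUnit.2 hBH) (by simpa using h)
    simpa only [star_mulVec, dotProduct_mulVec, vecMul_vecMul,
      conjTranspose_conjTranspose] using hP.dotProduct_mulVec_pos hx'

set_option maxHeartbeats 1000000 in
theorem stmt_2 (n : ℕ) (hn : 1 ≤ n) (J F₀ : Matrix (Fin n) (Fin n) ℝ)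
    (hJ : J * Jᵀ = 1) (hF₀ : IsUnit F₀) (M : Matrix (Fin n) (Fin n) ℝ)
    (hMdef : M = F₀ * J * F₀⁻¹) :
    {P : Matrix (Fin n) (Fin n) ℝ | P.PosDef ∧ M * P * Mᵀ = P} =
      {X : Matrix (Fin n) (Fin n) ℝ | ∃ A : Matrix (Fin n) (Fin n) ℝ, IsUnit A ∧
        A * J = J * A ∧ X = F₀ * A * Aᵀ * F₀ᵀ} := by
  have hdet : IsUnit F₀.det := (isUnit_iff_isUnit_det F₀).mp hF₀
  have hFinv : F₀ * F₀⁻¹ = 1 := mul_nonsing_inv F₀ hdet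
  have hFinv' : F₀⁻¹ * F₀ = 1 := nonsing_inv_mul F₀ hdet
  have hFinvT : F₀ᵀ * (F₀⁻¹)ᵀ = 1 := by rw [← transpose_mul, hFinv', transpose_one]
  have hJ' : Jᵀ * J = 1 := mul_eq_one_comm.mp hJ
  ext P
  simp only [Set.mem_setOf_eq]
  constructor
  · rintro ⟨hP, hinv⟩
    have hQ : (F₀⁻¹ * P * (F₀⁻¹)ᵀ).PosDef :=
      posDef_conj hP (isUnit_nonsing_inv_iff.mpr hF₀)
    set Q : Matrix (Fin n) (Fin n) ℝ := F₀⁻¹ * P * (F₀⁻¹)ᵀ with hQdef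
    clear_value Q
    have hPQ : P = F₀ * Q * F₀ᵀ := by
      rw [hQdef]
      calc P = (F₀ * F₀⁻¹) * P * (F₀ * F₀⁻¹)ᵀ := by
              rw [hFinv, transpose_one, one_mul, mul_one]
        _ = F₀ * (F₀⁻¹ * P * (F₀⁻¹)ᵀ) * F₀ᵀ := by
              rw [transpose_mul]; simp only [Matrix.mul_assoc]
    have hFM : F₀⁻¹ * M = J * F₀⁻¹ := by
      rw [hMdef, ← Matrix.mul_assoc, ← Matrix.mul_assoc, hFinv', one_mul]
    have hMT : Mᵀ * (F₀⁻¹)ᵀ = (F₀⁻¹)ᵀ * Jᵀ := by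
      rw [← transpose_mul, hFM, transpose_mul]
    have hJQ : J * Q * Jᵀ = Q := by
      rw [hQdef]
      calc J * (F₀⁻¹ * P * (F₀⁻¹)ᵀ) * Jᵀ
          = (J * F₀⁻¹) * P * ((F₀⁻¹)ᵀ * Jᵀ) := by simp only [Matrix.mul_assoc]
        _ = (F₀⁻¹ * M) * P * (Mᵀ * (F₀⁻¹)ᵀ) := by rw [hFM, hMT]
        _ = F₀⁻¹ * (M * P * Mᵀ) * (F₀⁻¹)ᵀ := by simp only [Matrix.mul_assoc]
        _ = F₀⁻¹ * P * (F₀⁻¹)ᵀ := by rw [hinv]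
    have hQps : Q.PosSemidef := hQ.posSemidef
    obtain ⟨A, hAps, hAsq⟩ : ∃ A : Matrix (Fin n) (Fin n) ℝ, A.PosSemidef ∧ A * A = Q :=
      open scoped MatrixOrder in
      ⟨CFC.sqrt Q, (CFC.sqrt_nonneg Q).posSemidef, CFC.sqrt_mul_sqrt_self Q hQps.nonneg⟩
    have hAT : Aᵀ = A := by
      rw [← conjTranspose_eq_transpose_of_trivial]; exact hAps.1
    have hAunit : IsUnit A := by
      rw [isUnit_iff_isUnit_det]
      have hd : A.det * A.det = Q.det := by rw [← det_mul, hAsq]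
      have hQd : (0:ℝ) < Q.det := hQ.det_pos
      rw [isUnit_iff_ne_zero]
      intro h; rw [h, mul_zero] at hd; exact absurd hd.symm (ne_of_gt hQd)
    have hconj : (J * A * Jᵀ).PosSemidef := by
      have := hAps.mul_mul_conjTranspose_same J
      rwa [conjTranspose_eq_transpose_of_trivial] at this
    have hsq : (J * A * Jᵀ) * (J * A * Jᵀ) = A * A := by
      calc (J * A * Jᵀ) * (J * A * Jᵀ) = J * (A * ((Jᵀ * J) * (A * Jᵀ))) := by simp only [Matrix.mul_assoc]
        _ = J * (A * A) * Jᵀ := by rw [hJ', one_mul]; simp only [Matrix.mul_assoc]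
        _ = A * A := by rw [hAsq]; exact hJQ
    have hJA : J * A * Jᵀ = A := open scoped MatrixOrder in
      (CFC.sq_eq_sq_iff _ _ hconj.nonneg hAps.nonneg).mp (by rw [pow_two, pow_two, hsq])
    have hcomm : A * J = J * A := by
      have h := congrArg (fun X => X * J) hJA
      simp only [Matrix.mul_assoc, hJ', Matrix.mul_one] at h
      exact h.symm
    exact ⟨A, hAunit, hcomm, by rw [hAT, hPQ, Matrix.mul_assoc F₀ A A, hAsq]⟩
  · rintro ⟨A, hA, hcomm, rfl⟩
    have hcommT : Aᵀ * Jᵀ = Jᵀ * Aᵀ := by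
      rw [← transpose_mul, ← transpose_mul, hcomm]
    refine ⟨?_, ?_⟩
    · have h1 : (F₀ * A) * 1 * (F₀ * A)ᵀ = F₀ * A * Aᵀ * F₀ᵀ := by
        rw [Matrix.mul_one, transpose_mul]; simp only [Matrix.mul_assoc]
      rw [← h1]
      exact posDef_conj Matrix.PosDef.one (hF₀.mul hA)
    · rw [hMdef, transpose_mul, transpose_mul]
      calc F₀ * J * F₀⁻¹ * (F₀ * A * Aᵀ * F₀ᵀ) * ((F₀⁻¹)ᵀ * (Jᵀ * F₀ᵀ))
          = F₀ * J * (F₀⁻¹ * F₀) * A * Aᵀ * (F₀ᵀ * (F₀⁻¹)ᵀ) * Jᵀ * F₀ᵀ := by simp only [Matrix.mul_assoc]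
        _ = F₀ * ((J * A) * (Aᵀ * Jᵀ)) * F₀ᵀ := by
            rw [hFinv', hFinvT, Matrix.mul_one, Matrix.mul_one]; simp only [Matrix.mul_assoc]
        _ = F₀ * ((A * J) * (Jᵀ * Aᵀ)) * F₀ᵀ := by rw [hcomm, hcommT]
        _ = F₀ * (A * (J * Jᵀ) * Aᵀ) * F₀ᵀ := by simp only [Matrix.mul_assoc]
        _ = F₀ * A * Aᵀ * F₀ᵀ := by rw [hJ, Matrix.mul_one]; simp only [Matrix.mul_assoc]
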